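/- arXiv:2108.10859 — 3 statements merged into one kernel-verified Lean document; each statement's English description precedes it below -/
import Mathlib

section
/- Let f : ℝ → ℝ be L-Lipschitz continuous (L > 0) on [x_l, x_r] with x_l < x_r, and let x_m = (x_r + x_l + (f(x_l) - f(x_r))/L)/2. Suppose s_m := (f(x_r) + f(x_l) - L(x_r - x_l))/2 ≤ m where m is a lower bound with m ≤ f(y) attained somewhere, i.e., m = min over [0,1] of f. Then f(x_m) - m ≤ 2L·min(x_m - x_l, x_r - x_m). -/
theorem stmt2 (f : ℝ → ℝ) (L : ℝ) (hL : 0 < L)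
    (x_l x_r : ℝ) (hlr : x_l < x_r)
    (hl : x_l ∈ Set.Icc (0:ℝ) 1) (hr : x_r ∈ Set.Icc (0:ℝ) 1)
    (hf : ∀ a ∈ Set.Icc (0:ℝ) 1, ∀ b ∈ Set.Icc (0:ℝ) 1, |f a - f b| ≤ L * |a - b|)
    (x_m : ℝ) (hm : x_m = (x_r + x_l + (f x_l - f x_r) / L) / 2)
    (m : ℝ) (hmin : ∀ y ∈ Set.Icc (0:ℝ) 1, m ≤ f y)
    (hatt : ∃ y ∈ Set.Icc (0:ℝ) 1, f y = m)
    (hs : (f x_r + f x_l - L * (x_r - x_l)) / 2 ≤ m) :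
    f x_m - m ≤ 2 * L * min (x_m - x_l) (x_r - x_m) := by
  have hlip := hf x_l hl x_r hr
  rw [show |x_l - x_r| = x_r - x_l by rw [abs_sub_comm]; exact abs_of_nonneg (by linarith)]
    at hlip
  have h1 : f x_l - f x_r ≤ L * (x_r - x_l) := (abs_le.mp hlip).2
  have h2 : -(L * (x_r - x_l)) ≤ f x_l - f x_r := (abs_le.mp hlip).1
  have hdiv1 : (f x_l - f x_r) / L ≤ x_r - x_l := by
    rw [div_le_iff₀ hL]; nlinarith
  have hdiv2 : -(x_r - x_l) ≤ (f x_l - f x_r) / L := by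
    rw [le_div_iff₀ hL]; nlinarith
  have hml : x_l ≤ x_m := by rw [hm]; linarith
  have hmr : x_m ≤ x_r := by rw [hm]; linarith
  have hmem : x_m ∈ Set.Icc (0:ℝ) 1 := ⟨le_trans hl.1 hml, le_trans hmr hr.2⟩
  have hlipL : f x_m - f x_l ≤ L * (x_m - x_l) := by
    have h := hf x_m hmem x_l hl
    rw [show |x_m - x_l| = x_m - x_l from abs_of_nonneg (by linarith)] at h
    exact le_trans (le_abs_self _) h
  have hlipR : f x_m - f x_r ≤ L * (x_r - x_m) := by
    have h := hf x_m hmem x_r hr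
    rw [show |x_m - x_r| = x_r - x_m by rw [abs_sub_comm]; exact abs_of_nonneg (by linarith)]
      at h
    exact le_trans (le_abs_self _) h
  have key1 : L * (x_m - x_l) = L * (x_r - x_l) / 2 + (f x_l - f x_r) / 2 := by
    rw [hm]; field_simp; ring
  have key2 : L * (x_r - x_m) = L * (x_r - x_l) / 2 - (f x_l - f x_r) / 2 := by
    rw [hm]; field_simp; ring
  rcases le_total (x_m - x_l) (x_r - x_m) with h | h
  · rw [min_eq_left h]; nlinarith
  · rw [min_eq_right h]; nlinarith
end

section
/- For all real x with 0 < x ≤ 1/2 and all real p ≥ 1: (1 - (1-2x)^p) / (1 - (1-x)^p) ≤ 2. -/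
theorem stmt7 (x p : ℝ) (hx0 : 0 < x) (hx1 : x ≤ 1 / 2) (hp : 1 ≤ p) :
    (1 - (1 - 2 * x) ^ p) / (1 - (1 - x) ^ p) ≤ 2 := by
  have h2x : 0 ≤ 1 - 2 * x := by linarith
  have hxx : 0 ≤ 1 - x := by linarith
  have hden : (1 - x) ^ p < 1 := by
    have := Real.rpow_lt_one hxx (by linarith) (by linarith)
    linarith
  have hkey : 2 * (1 - x) ^ p ≤ 1 + (1 - 2 * x) ^ p := by
    have hc2 := (convexOn_rpow hp).2 (Set.mem_Ici.2 h2x)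
      (Set.mem_Ici.2 (show (0:ℝ) ≤ 1 by norm_num))
      (by norm_num : (0:ℝ) ≤ 1/2) (by norm_num : (0:ℝ) ≤ 1/2) (by norm_num)
    simp only [smul_eq_mul] at hc2
    have heq : (1/2:ℝ) * (1 - 2*x) + 1/2 * 1 = 1 - x := by ring
    rw [heq, Real.one_rpow] at hc2
    linarith
  rw [div_le_iff₀ (by linarith)]
  linarith
end

section
/- For all real x with 0 < x ≤ 1/2 and all real p ≥ 1: x^p / (1 - (1-x)^p) ≤ 2^{-p} / (1 - 2^{-p}). -/
open Set

theorem stmt8 (x p : ℝ) (hx0 : 0 < x) (hx1 : x ≤ 1 / 2) (hp : 1 ≤ p) :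
    x ^ p / (1 - (1 - x) ^ p) ≤ (2:ℝ) ^ (-p) / (1 - (2:ℝ) ^ (-p)) := by
  have hp0 : (0:ℝ) < p := lt_of_lt_of_le one_pos hp
  have h1x : 0 < 1 - x := by linarith
  have h2 : ((2:ℝ)) ^ (-p) = ((1:ℝ)/2) ^ p := by
    rw [Real.rpow_neg (by norm_num), one_div, ← Real.inv_rpow (by norm_num)]
  rw [h2]
  -- key convexity inequality
  set L : ℝ := x / (1 - x) with hL
  have hL0 : 0 ≤ L := div_nonneg hx0.le h1x.le
  have hL1 : 0 ≤ 1 - L := by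
    have : L ≤ 1 := (div_le_one h1x).2 (by linarith)
    linarith
  have hconv := convexOn_rpow hp
  have ha : (1:ℝ)/2 ∈ Ici (0:ℝ) := by norm_num
  have hb : x/2 ∈ Ici (0:ℝ) := by simp [le_div_iff₀]; positivity
  have e1 : L * (1/2) + (1 - L) * (x/2) = x := by
    rw [hL]; field_simp; ring
  have e2 : (1 - L) * (1/2) + L * (x/2) = (1-x)/2 := by
    rw [hL]; field_simp; ring
  have k1 := hconv.2 ha hb hL0 hL1 (by ring)
  have k2 := hconv.2 ha hb hL1 hL0 (by ring)
  simp only [smul_eq_mul] at k1 k2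
  rw [e1] at k1
  rw [e2] at k2
  have key : x ^ p + ((1-x)/2) ^ p ≤ (1/2:ℝ) ^ p + (x/2) ^ p := by
    have := add_le_add k1 k2
    linarith [this]
  -- denominators
  have hhalf : ((1:ℝ)/2) ^ p < 1 := by
    calc ((1:ℝ)/2) ^ p ≤ ((1:ℝ)/2) ^ (1:ℝ) :=
          Real.rpow_le_rpow_of_exponent_ge (by norm_num) (by norm_num) hp
    _ < 1 := by norm_num
  have h1xp : (1-x) ^ p < 1 := by
    calc (1-x) ^ p ≤ (1-x) ^ (1:ℝ) :=
          Real.rpow_le_rpow_of_exponent_ge h1x (by linarith) hp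
    _ < 1 := by rw [Real.rpow_one]; linarith
  have hd1 : 0 < 1 - (1-x)^p := by linarith
  have hd2 : 0 < 1 - ((1:ℝ)/2)^p := by linarith
  rw [div_le_div_iff₀ hd1 hd2]
  have m1 : x ^ p * ((1:ℝ)/2) ^ p = (x/2) ^ p := by
    rw [← Real.mul_rpow hx0.le (by norm_num)]; ring_nf
  have m2 : ((1:ℝ)/2) ^ p * (1-x) ^ p = ((1-x)/2) ^ p := by
    rw [← Real.mul_rpow (by norm_num) h1x.le]; ring_nf
  nlinarith [key, m1, m2]
end
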